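/- With notation as above, for all μ, ν ∈ P(X) the function t ↦ M̂(μ, ν, t) is continuous on (0,∞). -/

import Mathlib

open Set MeasureTheory Filter Topology

noncomputable section

/-- The Łukasiewicz t-norm. -/
def luk (a b : ℝ) : ℝ := max (a + b - 1) 0

/-- A continuous t-norm on `[0,1]`. -/
structure IsContinuousTNorm (star : ℝ → ℝ → ℝ) : Prop where
  maps_to : ∀ a b, a ∈ Icc (0:ℝ) 1 → b ∈ Icc (0:ℝ) 1 → star a b ∈ Icc (0:ℝ) 1
  comm : ∀ a b, a ∈ Icc (0:ℝ) 1 → b ∈ Icc (0:ℝ) 1 → star a b = star b a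
  assoc : ∀ a b c, a ∈ Icc (0:ℝ) 1 → b ∈ Icc (0:ℝ) 1 → c ∈ Icc (0:ℝ) 1 →
    star (star a b) c = star a (star b c)
  continuous : ContinuousOn (fun p : ℝ × ℝ => star p.1 p.2) (Icc 0 1 ×ˢ Icc 0 1)
  one_right : ∀ a, a ∈ Icc (0:ℝ) 1 → star a 1 = a
  mono : ∀ a b c d, a ∈ Icc (0:ℝ) 1 → b ∈ Icc (0:ℝ) 1 → c ∈ Icc (0:ℝ) 1 →
    d ∈ Icc (0:ℝ) 1 → a ≤ c → b ≤ d → star a b ≤ star c d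

/-- A fuzzy metric (George–Veeramani) with respect to a t-norm `star`. -/
structure IsFuzzyMetric {X : Type*} (M : X → X → ℝ → ℝ) (star : ℝ → ℝ → ℝ) : Prop where
  pos : ∀ x y t, 0 < t → 0 < M x y t
  le_one : ∀ x y t, 0 < t → M x y t ≤ 1
  eq_one_iff : ∀ x y t, 0 < t → (M x y t = 1 ↔ x = y)
  symm : ∀ x y t, 0 < t → M x y t = M y x t
  triangle : ∀ x y z t s, 0 < t → 0 < s → star (M x y t) (M y z s) ≤ M x z (t + s)
  continuousOn : ∀ x y, ContinuousOn (fun t => M x y t) (Ioi (0:ℝ))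

/-- The open ball `B(x,r,t)` in a fuzzy metric space. -/
def fmBall {X : Type*} (M : X → X → ℝ → ℝ) (x : X) (r t : ℝ) : Set X :=
  {y | 1 - r < M x y t}

/-- The `r,t`-expansion `A^{r,t}` of a set `A`. -/
def fmExpand {X : Type*} (M : X → X → ℝ → ℝ) (A : Set X) (r t : ℝ) : Set X :=
  ⋃ x ∈ A, fmBall M x r t

/-- The fuzzy metric `M` generates the given topology on `X`. -/
def GeneratesTopology {X : Type*} [TopologicalSpace X] (M : X → X → ℝ → ℝ) : Prop :=
  TopologicalSpace.IsTopologicalBasis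
    {s : Set X | ∃ x r t, 0 < r ∧ r < 1 ∧ 0 < t ∧ s = fmBall M x r t}

/-- The set of admissible radii in the definition of the fuzzy Prokhorov metric. -/
def prokSet {X : Type*} [MeasurableSpace X] (M : X → X → ℝ → ℝ)
    (μ ν : Measure X) (t : ℝ) : Set ℝ :=
  {r | 0 < r ∧ r < 1 ∧ ∀ A : Set X, MeasurableSet A →
    μ A ≤ ν (fmExpand M A r t) + ENNReal.ofReal r ∧
    ν A ≤ μ (fmExpand M A r t) + ENNReal.ofReal r}

/-- The fuzzy Prokhorov function `M̂` on measures. -/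
def fuzzyProkhorov {X : Type*} [MeasurableSpace X] (M : X → X → ℝ → ℝ)
    (μ ν : Measure X) (t : ℝ) : ℝ :=
  1 - sInf (prokSet M μ ν t)

section FuzzyAux

variable {X : Type*}

lemma luk_lb (a b : ℝ) : a + b - 1 ≤ luk a b := le_max_left _ _

lemma fm_mono {M : X → X → ℝ → ℝ} (h : IsFuzzyMetric M luk) (x y : X) {t t' : ℝ}
    (ht : 0 < t) (htt : t ≤ t') : M x y t ≤ M x y t' := by
  rcases eq_or_lt_of_le htt with rfl | hlt
  · exact le_rfl
  · have hs : 0 < t' - t := sub_pos.mpr hlt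
    have htri := h.triangle x y y t (t' - t) ht hs
    rw [(h.eq_one_iff y y _ hs).mpr rfl] at htri
    have h1 : luk (M x y t) 1 = M x y t := by
      unfold luk
      rw [add_sub_cancel_right]
      exact max_eq_left (h.pos x y t ht).le
    rw [h1] at htri
    have : t + (t' - t) = t' := by ring
    rwa [this] at htri

lemma fm_chain2 {M : X → X → ℝ → ℝ} (h : IsFuzzyMetric M luk) (x a b y : X)
    {s u s' : ℝ} (hs : 0 < s) (hu : 0 < u) (hs' : 0 < s') :
    M x a s + M a b u + M b y s' - 2 ≤ M x y (s + u + s') := by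
  have h1 : M x a s + M a b u - 1 ≤ M x b (s + u) :=
    le_trans (luk_lb _ _) (h.triangle x a b s u hs hu)
  have h2 : M x b (s + u) + M b y s' - 1 ≤ M x y (s + u + s') :=
    le_trans (luk_lb _ _) (h.triangle x b y (s + u) s' (by positivity) hs')
  linarith

lemma mem_fmBall_self {M : X → X → ℝ → ℝ} (h : IsFuzzyMetric M luk) (x : X) {r t : ℝ}
    (hr : 0 < r) (ht : 0 < t) : x ∈ fmBall M x r t := by
  simp only [fmBall, Set.mem_setOf_eq]
  rw [(h.eq_one_iff x x t ht).mpr rfl]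
  linarith

lemma fmBall_isOpen [TopologicalSpace X] {M : X → X → ℝ → ℝ} (hgen : GeneratesTopology M)
    (x : X) {r t : ℝ} (hr0 : 0 < r) (hr1 : r < 1) (ht : 0 < t) : IsOpen (fmBall M x r t) :=
  hgen.isOpen ⟨x, r, t, hr0, hr1, ht, rfl⟩

/-- Compactness gluing: a locally uniform, downward-monotone property holds uniformly. -/
lemma exists_uniform [TopologicalSpace X] [CompactSpace X] [Nonempty X]
    {Q : X → X → ℝ → Prop}
    (hmono : ∀ x y d d', 0 < d' → d' ≤ d → Q x y d → Q x y d')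
    (hloc : ∀ x y : X, ∃ d > (0:ℝ), ∃ U : Set (X × X), IsOpen U ∧ (x, y) ∈ U ∧
      ∀ q ∈ U, Q q.1 q.2 d) :
    ∃ d > (0:ℝ), ∀ x y : X, Q x y d := by
  choose d hd U hUopen hmem hQ using fun p : X × X => hloc p.1 p.2
  obtain ⟨F, hF⟩ := (isCompact_univ : IsCompact (Set.univ : Set (X × X))).elim_finite_subcover
    U hUopen (fun q _ => Set.mem_iUnion.mpr ⟨q, hmem q⟩)
  have hFne : F.Nonempty := by
    obtain ⟨p⟩ := (inferInstance : Nonempty (X × X))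
    obtain ⟨q, hq, _⟩ := Set.mem_iUnion₂.mp (hF (Set.mem_univ p))
    exact ⟨q, hq⟩
  refine ⟨F.inf' hFne d, ?_, ?_⟩
  · exact (Finset.lt_inf'_iff hFne).mpr fun p hp => hd p
  · intro x y
    obtain ⟨p, hpF, hpU⟩ := Set.mem_iUnion₂.mp (hF (Set.mem_univ (x, y)))
    exact hmono x y (d p) _ ((Finset.lt_inf'_iff hFne).mpr fun q hq => hd q)
      (Finset.inf'_le d hpF) (hQ p (x, y) hpU)

/-- Uniform positivity of `M x y t` over a compact space. -/
lemma fm_inf_pos [TopologicalSpace X] [CompactSpace X] {M : X → X → ℝ → ℝ}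
    (hM : IsFuzzyMetric M luk) (hgen : GeneratesTopology M) {t : ℝ} (ht : 0 < t) :
    ∃ c > (0:ℝ), ∀ x y : X, c ≤ M x y t := by
  rcases isEmpty_or_nonempty X with hX | hX
  · exact ⟨1, one_pos, fun x => (hX.false x).elim⟩
  · refine exists_uniform (Q := fun x y c => c ≤ M x y t)
      (fun x y d d' _ hdd hQ => le_trans hdd hQ) ?_
    intro x y
    set c := M x y (t / 2) with hc
    have hc0 : 0 < c := hM.pos x y _ (by positivity)
    set r := min (c / 4) (1 / 2) with hrdef
    have hr0 : 0 < r := lt_min (by positivity) one_half_pos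
    have hr1 : r < 1 := lt_of_le_of_lt (min_le_right _ _) one_half_lt_one
    have hrc : r ≤ c / 4 := min_le_left _ _
    have ht4 : (0:ℝ) < t / 4 := by positivity
    refine ⟨c / 2, by positivity, fmBall M x r (t / 4) ×ˢ fmBall M y r (t / 4),
      (fmBall_isOpen hgen x hr0 hr1 ht4).prod (fmBall_isOpen hgen y hr0 hr1 ht4),
      ⟨mem_fmBall_self hM x hr0 ht4, mem_fmBall_self hM y hr0 ht4⟩, ?_⟩
    rintro ⟨x', y'⟩ ⟨hx', hy'⟩
    have h1 : 1 - r < M x x' (t / 4) := hx'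
    have h2 : 1 - r < M y y' (t / 4) := hy'
    have hchain := fm_chain2 hM x' x y y' (s := t / 4) (u := t / 2) (s' := t / 4)
      ht4 (by positivity) ht4
    have hsymm : M x' x (t / 4) = M x x' (t / 4) := hM.symm _ _ _ ht4
    have heq : t / 4 + t / 2 + t / 4 = t := by ring
    rw [hsymm, heq] at hchain
    simp only [Prod.fst, Prod.snd]
    linarith

/-- Uniform (in `x, y`) equicontinuity of `t ↦ M x y t` near `t₀`. -/
lemma fm_equicont [TopologicalSpace X] [CompactSpace X] {M : X → X → ℝ → ℝ}
    (hM : IsFuzzyMetric M luk) (hgen : GeneratesTopology M) {t₀ ε : ℝ}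
    (ht₀ : 0 < t₀) (hε : 0 < ε) :
    ∃ δ > (0:ℝ), δ < t₀ ∧ ∀ x y : X, M x y (t₀ + δ) ≤ M x y (t₀ - δ) + ε := by
  rcases isEmpty_or_nonempty X with hX | hX
  · exact ⟨t₀ / 2, by positivity, by linarith, fun x => (hX.false x).elim⟩
  · have key : ∃ δ > (0:ℝ), ∀ x y : X,
        δ < t₀ ∧ M x y (t₀ + δ) ≤ M x y (t₀ - δ) + ε := by
      refine exists_uniform (Q := fun x y δ => δ < t₀ ∧ M x y (t₀ + δ) ≤ M x y (t₀ - δ) + ε)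
        ?_ ?_
      · rintro x y d d' hd' hdd ⟨hdt, hQ⟩
        refine ⟨lt_of_le_of_lt hdd hdt, ?_⟩
        have h1 : M x y (t₀ + d') ≤ M x y (t₀ + d) :=
          fm_mono hM x y (by linarith) (by linarith)
        have h2 : M x y (t₀ - d) ≤ M x y (t₀ - d') :=
          fm_mono hM x y (by linarith) (by linarith)
        linarith
      · intro x y
        have hcont : ContinuousAt (fun u => M x y u) t₀ :=
          (hM.continuousOn x y).continuousAt (Ioi_mem_nhds ht₀)
        obtain ⟨η₀, hη₀, hη⟩ := Metric.continuousAt_iff.mp hcont (ε / 4) (by positivity)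
        set η := min (η₀ / 2) (t₀ / 2) with hηdef
        have hηpos : 0 < η := lt_min (by positivity) (by positivity)
        have hηlt : η < η₀ := lt_of_le_of_lt (min_le_left _ _) (by linarith)
        have hηt : η ≤ t₀ / 2 := min_le_right _ _
        set s := η / 4 with hsdef
        have hs : 0 < s := by positivity
        set r := min (ε / 8) (1 / 2) with hrdef
        have hr0 : 0 < r := lt_min (by positivity) one_half_pos
        have hr1 : r < 1 := lt_of_le_of_lt (min_le_right _ _) one_half_lt_one
        have hrε : r ≤ ε / 8 := min_le_left _ _
        have hup : |M x y (t₀ + η) - M x y t₀| < ε / 4 := by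
          have := hη (x := t₀ + η) (by rw [Real.dist_eq]; rw [abs_of_nonneg (by linarith)]; linarith)
          rwa [Real.dist_eq] at this
        have hdn : |M x y (t₀ - η) - M x y t₀| < ε / 4 := by
          have := hη (x := t₀ - η) (by rw [Real.dist_eq]; rw [abs_of_nonpos (by linarith)]; linarith)
          rwa [Real.dist_eq] at this
        refine ⟨η / 2, by positivity, fmBall M x r s ×ˢ fmBall M y r s,
          (fmBall_isOpen hgen x hr0 hr1 hs).prod (fmBall_isOpen hgen y hr0 hr1 hs),
          ⟨mem_fmBall_self hM x hr0 hs, mem_fmBall_self hM y hr0 hs⟩, ?_⟩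
        rintro ⟨x', y'⟩ ⟨hx', hy'⟩
        have h1 : 1 - r < M x x' s := hx'
        have h2 : 1 - r < M y y' s := hy'
        refine ⟨by linarith, ?_⟩
        simp only [Prod.fst, Prod.snd]
        -- upper bound: M x' y' (t₀ + η/2) ≤ M x y (t₀ + η) + 2r
        have hub := fm_chain2 hM x x' y' y (s := s) (u := t₀ + η / 2) (s' := s)
          hs (by linarith) hs
        have heq1 : s + (t₀ + η / 2) + s = t₀ + η := by rw [hsdef]; ring
        have hsy : M y' y s = M y y' s := hM.symm _ _ _ hs
        rw [heq1, hsy] at hub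
        have hMle1 : M x x' s ≤ 1 := hM.le_one _ _ _ hs
        have hMle2 : M y y' s ≤ 1 := hM.le_one _ _ _ hs
        -- lower bound: M x' y' (t₀ - η/2) ≥ M x y (t₀ - η) - 2r
        have hlb := fm_chain2 hM x' x y y' (s := s) (u := t₀ - η) (s' := s)
          hs (by linarith) hs
        have heq2 : s + (t₀ - η) + s = t₀ - η / 2 := by rw [hsdef]; ring
        have hsx : M x' x s = M x x' s := hM.symm _ _ _ hs
        rw [heq2, hsx] at hlb
        have habs1 := abs_lt.mp hup
        have habs2 := abs_lt.mp hdn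
        linarith [habs1.1, habs1.2, habs2.1, habs2.2]
    obtain ⟨δ, hδ0, hQ⟩ := key
    obtain ⟨x⟩ := hX
    exact ⟨δ, hδ0, (hQ x x).1, fun x y => (hQ x y).2⟩

lemma prokSet_nonempty [TopologicalSpace X] [CompactSpace X] [MeasurableSpace X]
    {M : X → X → ℝ → ℝ} (hM : IsFuzzyMetric M luk) (hgen : GeneratesTopology M)
    (μ ν : Measure X) [IsProbabilityMeasure μ] [IsProbabilityMeasure ν] {t : ℝ}
    (ht : 0 < t) : (prokSet M μ ν t).Nonempty := by
  obtain ⟨c, hc0, hc⟩ := fm_inf_pos hM hgen ht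
  set r := max (1 - c / 2) (1 / 2) with hrdef
  have hr0 : (0:ℝ) < r := lt_of_lt_of_le one_half_pos (le_max_right _ _)
  have hr1 : r < 1 := max_lt (by linarith) one_half_lt_one
  have hball : ∀ A : Set X, A.Nonempty → fmExpand M A r t = Set.univ := by
    intro A ⟨a, ha⟩
    refine Set.eq_univ_of_forall fun z => ?_
    refine Set.mem_iUnion₂.mpr ⟨a, ha, ?_⟩
    have h1 : 1 - r ≤ c / 2 := by
      have : 1 - c / 2 ≤ r := le_max_left _ _
      linarith
    have h2 : c ≤ M a z t := hc a z
    show 1 - r < M a z t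
    linarith
  have hkey : ∀ (κ lam : Measure X), IsProbabilityMeasure κ → IsProbabilityMeasure lam →
      ∀ A : Set X, κ A ≤ lam (fmExpand M A r t) + ENNReal.ofReal r := by
    intro κ lam hκ hlam A
    rcases Set.eq_empty_or_nonempty A with rfl | hA
    · simp
    · rw [hball A hA]
      calc κ A ≤ κ Set.univ := measure_mono (Set.subset_univ _)
        _ = 1 := hκ.measure_univ
        _ = lam Set.univ := hlam.measure_univ.symm
        _ ≤ lam Set.univ + ENNReal.ofReal r := le_self_add
  exact ⟨r, hr0, hr1, fun A _ =>
    ⟨hkey μ ν inferInstance inferInstance A, hkey ν μ inferInstance inferInstance A⟩⟩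

lemma sInf_prokSet_nonneg [MeasurableSpace X] (M : X → X → ℝ → ℝ) (μ ν : Measure X)
    (t : ℝ) : 0 ≤ sInf (prokSet M μ ν t) :=
  Real.sInf_nonneg fun r hr => hr.1.le

lemma sInf_prokSet_le_one [MeasurableSpace X] (M : X → X → ℝ → ℝ) (μ ν : Measure X)
    (t : ℝ) : sInf (prokSet M μ ν t) ≤ 1 := by
  rcases Set.eq_empty_or_nonempty (prokSet M μ ν t) with h | ⟨q, hq⟩
  · rw [h, Real.sInf_empty]; exact zero_le_one
  · exact le_trans (csInf_le ⟨0, fun x hx => hx.1.le⟩ hq) hq.2.1.le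

lemma sInf_prokSet_le [MeasurableSpace X] {M : X → X → ℝ → ℝ}
    {μ ν : Measure X} {t₁ t₂ ε : ℝ} (hε : 0 < ε)
    (hcmp : ∀ x y, M x y t₁ ≤ M x y t₂ + ε)
    (hne : (prokSet M μ ν t₁).Nonempty) :
    sInf (prokSet M μ ν t₂) ≤ sInf (prokSet M μ ν t₁) + ε := by
  have key : ∀ r ∈ prokSet M μ ν t₁, sInf (prokSet M μ ν t₂) - ε ≤ r := by
    intro r hr
    rcases lt_or_ge (r + ε) 1 with h1 | h1
    · have hsub : ∀ A : Set X, fmExpand M A r t₁ ⊆ fmExpand M A (r + ε) t₂ := by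
        intro A
        refine Set.iUnion₂_mono fun x hx => fun y hy => ?_
        have hy' : 1 - r < M x y t₁ := hy
        have := hcmp x y
        show 1 - (r + ε) < M x y t₂
        linarith
      have hmem : r + ε ∈ prokSet M μ ν t₂ := by
        refine ⟨by linarith [hr.1], h1, fun A hA => ?_⟩
        obtain ⟨hμ, hν⟩ := hr.2.2 A hA
        constructor
        · exact hμ.trans (add_le_add (measure_mono (hsub A))
            (ENNReal.ofReal_le_ofReal (by linarith)))
        · exact hν.trans (add_le_add (measure_mono (hsub A))
            (ENNReal.ofReal_le_ofReal (by linarith)))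
      have := csInf_le ⟨0, fun x hx => hx.1.le⟩ hmem
      linarith
    · have := sInf_prokSet_le_one M μ ν t₂
      linarith
  have := le_csInf hne key
  linarith

end FuzzyAux

/-- `t ↦ M̂(μ,ν,t)` is continuous on `(0,∞)`. -/
theorem fuzzyProkhorov_continuousOn {X : Type*} [TopologicalSpace X] [CompactSpace X]
    [MeasurableSpace X] [BorelSpace X]
    (M : X → X → ℝ → ℝ) (hM : IsFuzzyMetric M luk) (hgen : GeneratesTopology M)
    (μ ν : ProbabilityMeasure X) :
    ContinuousOn (fun t => fuzzyProkhorov M (μ : Measure X) (ν : Measure X) t)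
      (Ioi (0:ℝ)) := by
  intro t₀ ht₀
  have ht₀' : 0 < t₀ := ht₀
  rw [Metric.continuousWithinAt_iff]
  intro ε hε
  obtain ⟨δ, hδ0, hδt, hD⟩ := fm_equicont hM hgen ht₀' (half_pos hε)
  refine ⟨δ, hδ0, ?_⟩
  intro t ht hdist
  have ht' : 0 < t := ht
  rw [Real.dist_eq] at hdist
  have habs := abs_lt.mp hdist
  have hcmp1 : ∀ x y, M x y t ≤ M x y t₀ + ε / 2 := by
    intro x y
    have e1 : M x y t ≤ M x y (t₀ + δ) := fm_mono hM x y ht' (by linarith [habs.2])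
    have e2 : M x y (t₀ - δ) ≤ M x y t₀ := fm_mono hM x y (by linarith) (by linarith)
    linarith [hD x y]
  have hcmp2 : ∀ x y, M x y t₀ ≤ M x y t + ε / 2 := by
    intro x y
    have e1 : M x y t₀ ≤ M x y (t₀ + δ) := fm_mono hM x y ht₀' (by linarith)
    have e2 : M x y (t₀ - δ) ≤ M x y t := fm_mono hM x y (by linarith) (by linarith [habs.1])
    linarith [hD x y]
  have hne_t : (prokSet M (μ : Measure X) (ν : Measure X) t).Nonempty :=
    prokSet_nonempty hM hgen _ _ ht'
  have hne_t₀ : (prokSet M (μ : Measure X) (ν : Measure X) t₀).Nonempty :=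
    prokSet_nonempty hM hgen _ _ ht₀'
  have hE1 := sInf_prokSet_le (μ := (μ : Measure X)) (ν := (ν : Measure X))
    (half_pos hε) hcmp1 hne_t
  have hE2 := sInf_prokSet_le (μ := (μ : Measure X)) (ν := (ν : Measure X))
    (half_pos hε) hcmp2 hne_t₀
  simp only [fuzzyProkhorov]
  rw [Real.dist_eq]
  rw [abs_lt]
  constructor <;> [linarith; linarith]
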